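/- arXiv:1409.0827 — 4 statements merged into one kernel-verified Lean document; each statement's English description precedes it below -/
import Mathlib

section
/- Let R be a (not necessarily commutative) ring containing elements t, x, y satisfying t·x = y·t + 1, x·t = t·y + 1, x·y = y·x, and t² = 0. Then e := t·x and f := −y·t satisfy: e + f = 1, e² = e, f² = f, e·f = 0, and f·e = 0. In particular e and f are complementary orthogonal idempotents. -/
theorem nilHecke_idempotents {R : Type*} [Ring R] (t x y : R)
    (h1 : t * x = y * t + 1) (h2 : x * t = t * y + 1)
    (h3 : x * y = y * x) (h4 : t * t = 0) :
    t * x + -(y * t) = 1 ∧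
    (t * x) * (t * x) = t * x ∧
    (-(y * t)) * (-(y * t)) = -(y * t) ∧
    (t * x) * (-(y * t)) = 0 ∧
    (-(y * t)) * (t * x) = 0 := by
  have hty : t * y * t = -t := by
    have : t * y * t = (x * t - 1) * t := by rw [h2]; noncomm_ring
    rw [this, sub_mul, mul_assoc, h4, mul_zero, one_mul, zero_sub]
  refine ⟨by rw [h1]; abel, ?_, ?_, ?_, ?_⟩
  · have : t * x * (t * x) = t * (x * t) * x := by noncomm_ring
    rw [this, h2]
    have : t * (t * y + 1) * x = t * t * (y * x) + t * x := by noncomm_ring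
    rw [this, h4]; noncomm_ring
  · have : -(y * t) * -(y * t) = y * (t * y * t) := by noncomm_ring
    rw [this, hty]; noncomm_ring
  · have : t * x * -(y * t) = -(t * (x * y) * t) := by noncomm_ring
    rw [this, h3]
    have : t * (y * x) * t = (t * y) * (x * t) := by noncomm_ring
    rw [this, h2]
    have : t * y * (t * y + 1) = (t * y * t) * y + t * y := by noncomm_ring
    rw [this, hty]; noncomm_ring
  · have : -(y * t) * (t * x) = -(y * (t * t) * x) := by noncomm_ring
    rw [this, h4]; noncomm_ring
end

section
/- Let n ≥ 2 and let a₁, …, a_{n−1} be integers, not all zero. Set a₀ = aₙ = 0 and define λᵢ = 2aᵢ − a_{i−1} − a_{i+1} for 1 ≤ i ≤ n−1. Then there exists an index i with either (aᵢ ≥ 1 and λᵢ ≥ 1) or (aᵢ ≤ −1 and λᵢ ≤ −1). -/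
lemma sl_n_middle_weight_aux (n : ℕ) (hn : 2 ≤ n) (a : ℕ → ℤ)
    (h0 : a 0 = 0) (hn' : a n = 0)
    (hex : ∃ j, j ≤ n ∧ 1 ≤ a j) :
    ∃ i, 1 ≤ i ∧ i ≤ n - 1 ∧ 1 ≤ a i ∧ 1 ≤ 2 * a i - a (i - 1) - a (i + 1) := by
  obtain ⟨j0, hj0n, hj0⟩ := hex
  obtain ⟨m, hm, hmax⟩ := Finset.exists_max_image (Finset.range (n + 1)) a
    ⟨0, by simp⟩
  have hM1 : 1 ≤ a m := le_trans hj0 (hmax j0 (by simp; omega))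
  set S : Finset ℕ := (Finset.range (n + 1)).filter (fun j => a j = a m) with hS
  have hmS : m ∈ S := by simp [hS, hm]
  have hSne : S.Nonempty := ⟨m, hmS⟩
  set i := S.max' hSne with hi
  have hiS : i ∈ S := S.max'_mem hSne
  have hiM : a i = a m := (Finset.mem_filter.mp hiS).2
  have hin : i ≤ n := by
    have := (Finset.mem_filter.mp hiS).1
    simp at this; omega
  have hine : i ≠ n := by
    intro h; rw [h, hn'] at hiM; omega
  have hi0 : i ≠ 0 := by
    intro h; rw [h, h0] at hiM; omega
  have hile : i ≤ n - 1 := by omega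
  have hip1 : a (i + 1) ≤ a m - 1 := by
    have h1 : a (i + 1) ≤ a m := hmax _ (by simp; omega)
    have h2 : a (i + 1) ≠ a m := by
      intro h
      have : i + 1 ∈ S := by simp [hS, h]; omega
      have := S.le_max' _ this
      omega
    omega
  have him1 : a (i - 1) ≤ a m := hmax _ (by simp; omega)
  exact ⟨i, by omega, hile, by omega, by omega⟩

theorem sl_n_middle_weight_claim (n : ℕ) (hn : 2 ≤ n) (a : ℕ → ℤ)
    (h0 : a 0 = 0) (hn' : a n = 0)
    (hne : ∃ i, 1 ≤ i ∧ i ≤ n - 1 ∧ a i ≠ 0) :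
    ∃ i, 1 ≤ i ∧ i ≤ n - 1 ∧
      ((1 ≤ a i ∧ 1 ≤ 2 * a i - a (i - 1) - a (i + 1)) ∨
       (a i ≤ -1 ∧ 2 * a i - a (i - 1) - a (i + 1) ≤ -1)) := by
  obtain ⟨j, hj1, hj2, hj⟩ := hne
  rcases lt_or_gt_of_ne hj with hneg | hpos
  · obtain ⟨i, hi1, hi2, h1, h2⟩ := sl_n_middle_weight_aux n hn (fun k => -a k)
      (by simp [h0]) (by simp [hn']) ⟨j, by omega, by show 1 ≤ -a j; omega⟩
    exact ⟨i, hi1, hi2, Or.inr ⟨by omega, by omega⟩⟩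
  · obtain ⟨i, hi1, hi2, h1, h2⟩ := sl_n_middle_weight_aux n hn a h0 hn'
      ⟨j, by omega, by omega⟩
    exact ⟨i, hi1, hi2, Or.inl ⟨h1, h2⟩⟩
end

section
/- Let n ≥ 2, and consider the root lattice Y of sl_n with simple roots α₁, …, α_{n−1} and pairing ⟨λ, αᵢ⟩ = 2aᵢ − a_{i−1} − a_{i+1} for λ = Σⱼ aⱼαⱼ (with a₀ = aₙ = 0). Call a step λ ↝ λ + αᵢ a valid slide if ⟨λ, αᵢ⟩ ≥ −1, and λ ↝ λ − αᵢ a valid slide if ⟨λ, αᵢ⟩ ≤ 1. Then for every λ ∈ Y there exists a finite sequence of valid slides starting at 0 and ending at λ. -/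
/-- The type A pairing `⟨λ, αᵢ⟩ = 2aᵢ − a_{i−1} − a_{i+1}` for a weight written as
`λ = Σⱼ aⱼ αⱼ`, encoded as a function `a : ℕ → ℤ` (supported on `1, …, n−1`). -/
def typeAPairing (a : ℕ → ℤ) (i : ℕ) : ℤ := 2 * a i - a (i - 1) - a (i + 1)

/-- A valid slide on the root lattice of `sl_n`: `λ ↝ λ + αᵢ` if `⟨λ, αᵢ⟩ ≥ −1`, and
`λ ↝ λ − αᵢ` if `⟨λ, αᵢ⟩ ≤ 1`, for `1 ≤ i ≤ n−1`. -/
def ValidSlide (n : ℕ) (a b : ℕ → ℤ) : Prop :=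
  ∃ i, 1 ≤ i ∧ i ≤ n - 1 ∧
    ((-1 ≤ typeAPairing a i ∧ b = fun j => a j + if j = i then 1 else 0) ∨
     (typeAPairing a i ≤ 1 ∧ b = fun j => a j - if j = i then 1 else 0))

lemma slide_up (n i : ℕ) (h1 : 1 ≤ i) (h2 : i ≤ n - 1) (lam : ℕ → ℤ)
    (hp : 1 ≤ typeAPairing lam i) :
    ValidSlide n (fun j => lam j - if j = i then 1 else 0) lam := by
  refine ⟨i, h1, h2, Or.inl ⟨?_, ?_⟩⟩
  · have hi1 : i - 1 ≠ i := by omega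
    have hi2 : i + 1 ≠ i := by omega
    simp only [typeAPairing] at hp ⊢
    simp only [if_pos rfl, if_neg hi1, if_neg hi2, if_true]
    linarith
  · funext j; simp

lemma slide_down (n i : ℕ) (h1 : 1 ≤ i) (h2 : i ≤ n - 1) (lam : ℕ → ℤ)
    (hp : typeAPairing lam i ≤ -1) :
    ValidSlide n (fun j => lam j + if j = i then 1 else 0) lam := by
  refine ⟨i, h1, h2, Or.inr ⟨?_, ?_⟩⟩
  · have hi1 : i - 1 ≠ i := by omega
    have hi2 : i + 1 ≠ i := by omega
    simp only [typeAPairing] at hp ⊢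
    simp only [if_pos rfl, if_neg hi1, if_neg hi2, if_true]
    linarith
  · funext j; simp

theorem sl_n_has_middle_weight (n : ℕ) (hn : 2 ≤ n) (lam : ℕ → ℤ)
    (hsupp : ∀ j, (j < 1 ∨ n - 1 < j) → lam j = 0) :
    Relation.ReflTransGen (ValidSlide n) (fun _ => 0) lam := by
  have hne : (Finset.range n).Nonempty := ⟨0, by simp; omega⟩
  have key : ∀ N : ℕ, ∀ lam : ℕ → ℤ, (∀ j, (j < 1 ∨ n - 1 < j) → lam j = 0) →
      (∑ j ∈ Finset.range n, (lam j).natAbs) ≤ N →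
      Relation.ReflTransGen (ValidSlide n) (fun _ => 0) lam := by
    intro N
    induction N with
    | zero =>
      intro lam hs hsum
      have hz : ∀ j, lam j = 0 := by
        intro j
        by_cases hj : j < n
        · have := Finset.sum_eq_zero_iff.mp (Nat.le_zero.mp hsum) j (Finset.mem_range.mpr hj)
          omega
        · exact hs j (by omega)
      have : lam = fun _ => 0 := funext hz
      rw [this]
    | succ N ih =>
      intro lam hs hsum
      by_cases h0 : ∀ j ∈ Finset.range n, lam j = 0
      · have hz : ∀ j, lam j = 0 := by
          intro j
          by_cases hj : j < n
          · exact h0 j (Finset.mem_range.mpr hj)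
          · exact hs j (by omega)
        rw [funext hz]
      · by_cases hpos : ∃ j ∈ Finset.range n, 0 < lam j
        · -- take the max coefficient
          set M := (Finset.range n).sup' hne lam with hM
          have hle : ∀ j ∈ Finset.range n, lam j ≤ M := fun j hj => Finset.le_sup' lam hj
          obtain ⟨j₀, hj₀, hj₀M⟩ := Finset.exists_mem_eq_sup' hne lam
          have hMpos : 0 < M := by
            obtain ⟨j, hj, hjp⟩ := hpos
            exact lt_of_lt_of_le hjp (hle j hj)
          have hex : ∃ j, lam j = M := ⟨j₀, hj₀M.symm⟩
          set i := Nat.find hex with hi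
          have hiM : lam i = M := Nat.find_spec hex
          have hmin : ∀ k < i, lam k ≠ M := fun k hk => Nat.find_min hex hk
          have hli : 1 ≤ lam i := by rw [hiM]; exact hMpos
          have hi1 : 1 ≤ i := by
            rcases Nat.eq_zero_or_pos i with h | h
            · exfalso; have := hs 0 (Or.inl one_pos); rw [h] at hiM; omega
            · exact h
          have hi2 : i ≤ n - 1 := by
            by_contra h
            have := hs i (Or.inr (by omega)); omega
          have him1 : lam (i - 1) ≤ M - 1 := by
            have h1 : i - 1 < i := by omega
            have h2 : lam (i - 1) ≤ M := hle _ (Finset.mem_range.mpr (by omega))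
            have := hmin (i - 1) h1
            omega
          have hip1 : lam (i + 1) ≤ M := by
            by_cases h : i + 1 < n
            · exact hle _ (Finset.mem_range.mpr h)
            · rw [hs (i + 1) (Or.inr (by omega))]; omega
          have hp : 1 ≤ typeAPairing lam i := by
            simp only [typeAPairing]; omega
          set lam' : ℕ → ℤ := fun j => lam j - if j = i then 1 else 0 with hlam'
          have hs' : ∀ j, (j < 1 ∨ n - 1 < j) → lam' j = 0 := by
            intro j hj
            have hji : j ≠ i := by omega
            simp [hlam', hji, hs j hj]
          have hsum' : (∑ j ∈ Finset.range n, (lam' j).natAbs) ≤ N := by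
            have hlt : (∑ j ∈ Finset.range n, (lam' j).natAbs) <
                ∑ j ∈ Finset.range n, (lam j).natAbs := by
              apply Finset.sum_lt_sum
              · intro j _
                by_cases hji : j = i
                · subst hji; simp [hlam']; omega
                · simp [hlam', hji]
              · refine ⟨i, Finset.mem_range.mpr (by omega), ?_⟩
                simp [hlam']; omega
            omega
          exact (ih lam' hs' hsum').tail (slide_up n i hi1 hi2 lam hp)
        · -- all coefficients ≤ 0, some < 0: take the min coefficient
          push_neg at hpos
          set M := (Finset.range n).inf' hne lam with hM
          have hle : ∀ j ∈ Finset.range n, M ≤ lam j := fun j hj => Finset.inf'_le lam hj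
          obtain ⟨j₀, hj₀, hj₀M⟩ := Finset.exists_mem_eq_inf' hne lam
          have hMneg : M < 0 := by
            push_neg at h0
            obtain ⟨j, hj, hjp⟩ := h0
            have h1 := hpos j hj
            have h2 := hle j hj
            omega
          have hex : ∃ j, lam j = M := ⟨j₀, hj₀M.symm⟩
          set i := Nat.find hex with hi
          have hiM : lam i = M := Nat.find_spec hex
          have hmin : ∀ k < i, lam k ≠ M := fun k hk => Nat.find_min hex hk
          have hli : lam i ≤ -1 := by rw [hiM]; omega
          have hi1 : 1 ≤ i := by
            rcases Nat.eq_zero_or_pos i with h | h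
            · exfalso; have := hs 0 (Or.inl one_pos); rw [h] at hiM; omega
            · exact h
          have hi2 : i ≤ n - 1 := by
            by_contra h
            have := hs i (Or.inr (by omega)); omega
          have him1 : M + 1 ≤ lam (i - 1) := by
            have h1 : i - 1 < i := by omega
            have h2 : M ≤ lam (i - 1) := hle _ (Finset.mem_range.mpr (by omega))
            have := hmin (i - 1) h1
            omega
          have hip1 : M ≤ lam (i + 1) := by
            by_cases h : i + 1 < n
            · exact hle _ (Finset.mem_range.mpr h)
            · rw [hs (i + 1) (Or.inr (by omega))]; omega
          have hp : typeAPairing lam i ≤ -1 := by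
            simp only [typeAPairing]; omega
          set lam' : ℕ → ℤ := fun j => lam j + if j = i then 1 else 0 with hlam'
          have hs' : ∀ j, (j < 1 ∨ n - 1 < j) → lam' j = 0 := by
            intro j hj
            have hji : j ≠ i := by omega
            simp [hlam', hji, hs j hj]
          have hsum' : (∑ j ∈ Finset.range n, (lam' j).natAbs) ≤ N := by
            have hlt : (∑ j ∈ Finset.range n, (lam' j).natAbs) <
                ∑ j ∈ Finset.range n, (lam j).natAbs := by
              apply Finset.sum_lt_sum
              · intro j _
                by_cases hji : j = i
                · subst hji; simp [hlam']; omega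
                · simp [hlam', hji]
              · refine ⟨i, Finset.mem_range.mpr (by omega), ?_⟩
                simp [hlam']; omega
            omega
          exact (ih lam' hs' hsum').tail (slide_down n i hi1 hi2 lam hp)
  exact key _ lam hsupp le_rfl
end

section
/- Let I be a set and consider finite lists of pairs (c, k) with c ∈ {+1, −1} and k ∈ I. Allow two moves: (Switch) swap two adjacent entries (c,k), (c',k') provided c + c' = 0 and k ≠ k'; (Drop) delete two adjacent entries of the form (c,k), (−c,k). Then every list in which, for each k ∈ I, the number of entries (+1,k) equals the number of entries (−1,k), can be reduced to the empty list by a finite sequence of these moves. -/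
/-- A single switch or drop move on a signed list. -/
inductive SwitchDropMove (I : Type*) : List (ℤ × I) → List (ℤ × I) → Prop
  | switch (l₁ l₂ : List (ℤ × I)) (c c' : ℤ) (k k' : I)
      (hc : c + c' = 0) (hk : k ≠ k') :
      SwitchDropMove I (l₁ ++ (c, k) :: (c', k') :: l₂) (l₁ ++ (c', k') :: (c, k) :: l₂)
  | drop (l₁ l₂ : List (ℤ × I)) (c : ℤ) (k : I) :
      SwitchDropMove I (l₁ ++ (c, k) :: (-c, k) :: l₂) (l₁ ++ l₂)

namespace SDMaux

variable {I : Type*} [DecidableEq I]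

/-- Reachability by switch/drop moves. -/
abbrev R (I : Type*) : List (ℤ × I) → List (ℤ × I) → Prop :=
  Relation.ReflTransGen (SwitchDropMove I)

lemma move_prefix {l l' : List (ℤ × I)} (pre : List (ℤ × I)) (h : SwitchDropMove I l l') :
    SwitchDropMove I (pre ++ l) (pre ++ l') := by
  cases h with
  | switch l₁ l₂ c c' k k' hc hk =>
      simpa [List.append_assoc] using
        SwitchDropMove.switch (pre ++ l₁) l₂ c c' k k' hc hk
  | drop l₁ l₂ c k =>
      simpa [List.append_assoc] using SwitchDropMove.drop (pre ++ l₁) l₂ c k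

lemma r_prefix {l l' : List (ℤ × I)} (pre : List (ℤ × I)) (h : R I l l') :
    R I (pre ++ l) (pre ++ l') := by
  induction h with
  | refl => exact Relation.ReflTransGen.refl
  | tail _ h₂ ih => exact ih.tail (move_prefix pre h₂)

lemma switch_head (c c' : ℤ) (k k' : I) (t : List (ℤ × I)) (hc : c + c' = 0) (hk : k ≠ k') :
    SwitchDropMove I ((c, k) :: (c', k') :: t) ((c', k') :: (c, k) :: t) := by
  simpa using SwitchDropMove.switch [] t c c' k k' hc hk

lemma drop_head (c : ℤ) (k : I) (t : List (ℤ × I)) :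
    SwitchDropMove I ((c, k) :: (-c, k) :: t) t := by
  simpa using SwitchDropMove.drop [] t c k

/-- Slide `(c,k)` rightwards past a block of opposite-sign, different-index entries. -/
lemma slide_right (c : ℤ) (k : I) :
    ∀ (N suf : List (ℤ × I)), (∀ p ∈ N, p.1 = -c ∧ p.2 ≠ k) →
      R I ((c, k) :: (N ++ suf)) (N ++ (c, k) :: suf)
  | [], suf, _ => Relation.ReflTransGen.refl
  | q :: N, suf, h => by
      obtain ⟨hq1, hq2⟩ := h q (by simp)
      have m1 : SwitchDropMove I ((c, k) :: (q.1, q.2) :: (N ++ suf))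
          ((q.1, q.2) :: (c, k) :: (N ++ suf)) :=
        switch_head c q.1 k q.2 _ (by rw [hq1]; ring) (Ne.symm hq2)
      have ih := slide_right c k N suf (fun p hp => h p (by simp [hp]))
      have lift := r_prefix [q] ih
      have m1x : SwitchDropMove I ((c, k) :: (q :: N ++ suf)) (q :: ((c, k) :: (N ++ suf))) := by
        simpa using m1
      have liftx : R I (q :: ((c, k) :: (N ++ suf))) (q :: N ++ (c, k) :: suf) := by
        simpa using lift
      exact Relation.ReflTransGen.head m1x liftx

/-- Slide `(c,k)` leftwards past a block of opposite-sign, different-index entries. -/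
lemma slide_left (c : ℤ) (k : I) :
    ∀ (P suf : List (ℤ × I)), (∀ p ∈ P, p.1 = -c ∧ p.2 ≠ k) →
      R I (P ++ (c, k) :: suf) ((c, k) :: (P ++ suf))
  | [], suf, _ => Relation.ReflTransGen.refl
  | q :: P, suf, h => by
      obtain ⟨hq1, hq2⟩ := h q (by simp)
      have ih := slide_left c k P suf (fun p hp => h p (by simp [hp]))
      have lift := r_prefix [q] ih
      have m1 : SwitchDropMove I ((q.1, q.2) :: (c, k) :: (P ++ suf))
          ((c, k) :: (q.1, q.2) :: (P ++ suf)) :=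
        switch_head q.1 c q.2 k _ (by rw [hq1]; ring) hq2
      have step : R I (q :: (P ++ (c, k) :: suf)) (q :: (c, k) :: (P ++ suf)) := by
        simpa using lift
      refine step.trans (Relation.ReflTransGen.single ?_)
      simpa using m1

/-- Either a same-sign entry `b` passes to the right of an opposite-sign block `N`,
or a drop happens along the way. -/
lemma passOrDrop (c : ℤ) :
    ∀ (N : List (ℤ × I)) (b : ℤ × I), b.1 = c → (∀ p ∈ N, p.1 = -c) →
      (∀ suf, R I (b :: (N ++ suf)) (N ++ b :: suf)) ∨
      (∃ C : List (ℤ × I), C.length + 2 = N.length + 1 ∧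
        ∀ suf, R I (b :: (N ++ suf)) (C ++ suf))
  | [], b, hb, hN => Or.inl (fun suf => Relation.ReflTransGen.refl)
  | q :: N, b, hb, hN => by
      have hq1 : q.1 = -c := hN q (by simp)
      by_cases hk : q.2 = b.2
      · -- drop b and q
        refine Or.inr ⟨N, by simp, fun suf => Relation.ReflTransGen.single ?_⟩
        have : SwitchDropMove I ((c, b.2) :: (-c, b.2) :: (N ++ suf)) (N ++ suf) :=
          drop_head c b.2 _
        have hb' : b = (c, b.2) := by rw [← hb]
        have hq' : q = (-c, b.2) := by rw [← hq1, ← hk]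
        rw [hb', hq']
        simpa using this
      · rcases passOrDrop c N b hb (fun p hp => hN p (by simp [hp])) with hpass | ⟨C, hC, hR⟩
        · refine Or.inl (fun suf => ?_)
          have m1 : SwitchDropMove I ((c, b.2) :: (q.1, q.2) :: (N ++ suf))
              ((q.1, q.2) :: (c, b.2) :: (N ++ suf)) :=
            switch_head c q.1 b.2 q.2 _ (by rw [hq1]; ring) (fun h => hk h.symm)
          have m1' : SwitchDropMove I (b :: ((q :: N) ++ suf)) (q :: (b :: (N ++ suf))) := by
            have hb' : b = (c, b.2) := by rw [← hb]
            rw [hb']; simpa using m1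
          refine Relation.ReflTransGen.head m1' ?_
          have := r_prefix [q] (hpass suf)
          simpa using this
        · refine Or.inr ⟨q :: C, by simpa using hC, fun suf => ?_⟩
          have m1 : SwitchDropMove I ((c, b.2) :: (q.1, q.2) :: (N ++ suf))
              ((q.1, q.2) :: (c, b.2) :: (N ++ suf)) :=
            switch_head c q.1 b.2 q.2 _ (by rw [hq1]; ring) (fun h => hk h.symm)
          have m1' : SwitchDropMove I (b :: ((q :: N) ++ suf)) (q :: (b :: (N ++ suf))) := by
            have hb' : b = (c, b.2) := by rw [← hb]
            rw [hb']; simpa using m1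
          refine Relation.ReflTransGen.head m1' ?_
          have := r_prefix [q] (hR suf)
          simpa using this

/-- Either a block can be sorted (negatives first), or a drop happens inside it. -/
lemma sortOrDrop (c : ℤ) (hc : c = 1 ∨ c = -1) :
    ∀ (B : List (ℤ × I)), (∀ p ∈ B, p.1 = 1 ∨ p.1 = -1) →
      (∃ N P : List (ℤ × I),
        (∀ p ∈ N, p.1 = -c ∧ p ∈ B) ∧ (∀ p ∈ P, p.1 = c ∧ p ∈ B) ∧
        N.length + P.length = B.length ∧
        ∀ suf, R I (B ++ suf) (N ++ (P ++ suf))) ∨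
      (∃ C : List (ℤ × I), C.length + 2 = B.length ∧
        ∀ suf, R I (B ++ suf) (C ++ suf))
  | [], _ => Or.inl ⟨[], [], by simp, by simp, by simp, fun suf => Relation.ReflTransGen.refl⟩
  | b :: B₁, hs => by
      have hb : b.1 = 1 ∨ b.1 = -1 := hs b (by simp)
      have ih := sortOrDrop c hc B₁ (fun p hp => hs p (by simp [hp]))
      by_cases hbc : b.1 = -c
      · rcases ih with ⟨N, P, hN, hP, hlen, hR⟩ | ⟨C, hC, hR⟩
        · refine Or.inl ⟨b :: N, P, ?_, ?_, by simpa using by omega, fun suf => ?_⟩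
          · intro p hp
            rcases List.mem_cons.1 hp with rfl | hp
            · exact ⟨hbc, by simp⟩
            · exact ⟨(hN p hp).1, by simp [(hN p hp).2]⟩
          · exact fun p hp => ⟨(hP p hp).1, by simp [(hP p hp).2]⟩
          · have := r_prefix [b] (hR suf)
            simpa using this
        · refine Or.inr ⟨b :: C, by simpa using hC, fun suf => ?_⟩
          have := r_prefix [b] (hR suf)
          simpa using this
      · have hbc' : b.1 = c := by rcases hc with rfl | rfl <;> rcases hb with h | h <;> omega
        rcases ih with ⟨N, P, hN, hP, hlen, hR⟩ | ⟨C, hC, hR⟩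
        · rcases passOrDrop c N b hbc' (fun p hp => (hN p hp).1) with hpass | ⟨C₂, hC₂, hR₂⟩
          · refine Or.inl ⟨N, b :: P, ?_, ?_, by simp at hlen ⊢; omega, fun suf => ?_⟩
            · exact fun p hp => ⟨(hN p hp).1, by simp [(hN p hp).2]⟩
            · intro p hp
              rcases List.mem_cons.1 hp with rfl | hp
              · exact ⟨hbc', by simp⟩
              · exact ⟨(hP p hp).1, by simp [(hP p hp).2]⟩
            · have step1 : R I (b :: (B₁ ++ suf)) (b :: (N ++ (P ++ suf))) := by
                simpa using r_prefix [b] (hR suf)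
              have step2 := hpass (P ++ suf)
              exact Relation.ReflTransGen.trans (by simpa using step1) step2
          · refine Or.inr ⟨C₂ ++ P, ?_, fun suf => ?_⟩
            · simp at hC₂ hlen ⊢; omega
            · have step1 : R I (b :: (B₁ ++ suf)) (b :: (N ++ (P ++ suf))) := by
                simpa using r_prefix [b] (hR suf)
              have step2 := hR₂ (P ++ suf)
              exact Relation.ReflTransGen.trans (by simpa using step1) (by simpa using step2)
        · refine Or.inr ⟨b :: C, by simpa using hC, fun suf => ?_⟩
          have := r_prefix [b] (hR suf)
          simpa using this

/-- First occurrence of an index in a list. -/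
lemma exists_first_occ :
    ∀ (t : List (ℤ × I)) (k : I), (∃ c₁ : ℤ, (c₁, k) ∈ t) →
      ∃ (B : List (ℤ × I)) (c₁ : ℤ) (t' : List (ℤ × I)),
        t = B ++ (c₁, k) :: t' ∧ ∀ p ∈ B, p.2 ≠ k
  | [], k, h => by simp at h
  | q :: t, k, h => by
      by_cases hk : q.2 = k
      · exact ⟨[], q.1, t, by simp [← hk], by simp⟩
      · obtain ⟨c₁, hc₁⟩ := h
        have hc₁' : (c₁, k) ∈ t := by
          rcases List.mem_cons.1 hc₁ with h' | h'
          · exact absurd (congrArg Prod.snd h'.symm) hk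
          · exact h'
        obtain ⟨B, c₂, t', heq, hB⟩ := exists_first_occ t k ⟨c₁, hc₁'⟩
        refine ⟨q :: B, c₂, t', by simp [heq], ?_⟩
        intro p hp
        rcases List.mem_cons.1 hp with rfl | hp
        · exact hk
        · exact hB p hp

/-- Find a cancelable pair with no same-index entries in between. -/
lemma exists_pair :
    ∀ (t : List (ℤ × I)) (c : ℤ) (k : I), (-c, k) ∈ t →
      (c = 1 ∨ c = -1) → (∀ p ∈ t, p.1 = 1 ∨ p.1 = -1) →
      ∃ (A : List (ℤ × I)) (c' : ℤ) (k' : I) (B s : List (ℤ × I)),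
        (c, k) :: t = A ++ (c', k') :: (B ++ (-c', k') :: s) ∧
        (∀ p ∈ B, p.2 ≠ k') ∧ (c' = 1 ∨ c' = -1)
  | t, c, k, hmem, hc, hs => by
      obtain ⟨B₀, c₁, t', heq, hB₀⟩ := exists_first_occ t k ⟨-c, hmem⟩
      have hc₁ : c₁ = 1 ∨ c₁ = -1 := hs (c₁, k) (by rw [heq]; simp)
      by_cases hneg : c₁ = -c
      · exact ⟨[], c, k, B₀, t', by rw [heq, hneg]; rfl, hB₀, hc⟩
      · have hcc : c₁ = c := by rcases hc with rfl | rfl <;> rcases hc₁ with h | h <;> omega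
        have hmem' : (-c, k) ∈ t' := by
          rw [heq] at hmem
          rcases List.mem_append.1 hmem with h' | h'
          · exact absurd rfl (hB₀ (-c, k) h')
          · rcases List.mem_cons.1 h' with h'' | h''
            · exact absurd (congrArg Prod.fst h'') (by simpa using fun h => hneg h.symm)
            · exact h''
        have hlen' : t'.length < t.length := by
          rw [heq]
          simp [List.length_append]
          omega
        have hs' : ∀ p ∈ t', p.1 = 1 ∨ p.1 = -1 := fun p hp =>
          hs p (by rw [heq]; simp [hp])
        obtain ⟨A', c', k', B', s', heq', hB', hc'⟩ :=
          exists_pair t' c k hmem' hc hs'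
        refine ⟨(c, k) :: B₀ ++ A', c', k', B', s', ?_, hB', hc'⟩
        rw [heq, hcc]
        rw [show ((c,k) :: (B₀ ++ (c,k) :: t') : List (ℤ × I))
            = (c,k) :: B₀ ++ ((c,k) :: t') by simp]
        rw [heq']
        simp
  termination_by t => t.length
  decreasing_by exact hlen'

lemma signs_move {l l' : List (ℤ × I)} (h : SwitchDropMove I l l')
    (hs : ∀ p ∈ l, p.1 = 1 ∨ p.1 = -1) : ∀ p ∈ l', p.1 = 1 ∨ p.1 = -1 := by
  cases h with
  | switch l₁ l₂ c c' k k' hc hk =>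
      intro p hp
      apply hs
      simp only [List.mem_append, List.mem_cons] at hp ⊢
      tauto
  | drop l₁ l₂ c k =>
      intro p hp
      apply hs
      simp only [List.mem_append, List.mem_cons] at hp ⊢
      tauto

lemma bal_move {l l' : List (ℤ × I)} (h : SwitchDropMove I l l')
    (hs : ∀ p ∈ l, p.1 = 1 ∨ p.1 = -1)
    (hb : ∀ k : I, l.count ((1 : ℤ), k) = l.count ((-1 : ℤ), k)) :
    ∀ k : I, l'.count ((1 : ℤ), k) = l'.count ((-1 : ℤ), k) := by
  cases h with
  | switch l₁ l₂ c c' k k' hc hk =>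
      intro k''
      have := hb k''
      simp [List.count_append, List.count_cons] at this ⊢
      omega
  | drop l₁ l₂ c k =>
      have hcs : c = 1 ∨ c = -1 := hs (c, k) (by simp)
      intro k''
      have h1 := hb k''
      rcases hcs with rfl | rfl
      · by_cases hk' : k = k''
        · subst hk'
          simp [List.count_append, List.count_cons] at h1 ⊢
          omega
        · simp [List.count_append, List.count_cons, Prod.ext_iff, hk'] at h1 ⊢
          omega
      · by_cases hk' : k = k''
        · subst hk'
          simp [List.count_append, List.count_cons] at h1 ⊢
          omega
        · simp [List.count_append, List.count_cons, Prod.ext_iff, hk'] at h1 ⊢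
          omega

lemma preserve_r {l l' : List (ℤ × I)} (h : R I l l')
    (hs : ∀ p ∈ l, p.1 = 1 ∨ p.1 = -1)
    (hb : ∀ k : I, l.count ((1 : ℤ), k) = l.count ((-1 : ℤ), k)) :
    (∀ p ∈ l', p.1 = 1 ∨ p.1 = -1) ∧
      (∀ k : I, l'.count ((1 : ℤ), k) = l'.count ((-1 : ℤ), k)) := by
  induction h with
  | refl => exact ⟨hs, hb⟩
  | tail _ h₂ ih => exact ⟨signs_move h₂ ih.1, bal_move h₂ ih.1 ih.2⟩

/-- The key reduction step: a nonempty balanced list moves to a strictly shorter list. -/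
lemma step_shorter (l : List (ℤ × I)) (hne : l ≠ [])
    (hs : ∀ p ∈ l, p.1 = 1 ∨ p.1 = -1)
    (hb : ∀ k : I, l.count ((1 : ℤ), k) = l.count ((-1 : ℤ), k)) :
    ∃ l', R I l l' ∧ l'.length < l.length := by
  obtain ⟨⟨c, k⟩, t, rfl⟩ : ∃ a t, l = a :: t := by
    cases l with
    | nil => exact absurd rfl hne
    | cons a t => exact ⟨a, t, rfl⟩
  have hc : c = 1 ∨ c = -1 := hs (c, k) (by simp)
  have hmem : ((-c, k) : ℤ × I) ∈ (c, k) :: t := by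
    have hcount : 0 < ((c, k) :: t).count ((-c, k) : ℤ × I) := by
      have h1 := hb k
      have h2 : 0 < ((c, k) :: t).count ((c, k) : ℤ × I) :=
        List.count_pos_iff.2 (by simp)
      rcases hc with rfl | rfl
      · omega
      · rw [neg_neg]
        omega
    exact List.count_pos_iff.1 hcount
  have hmem' : ((-c, k) : ℤ × I) ∈ t := by
    rcases List.mem_cons.1 hmem with h' | h'
    · exfalso
      have : -c = c := congrArg Prod.fst h'
      rcases hc with rfl | rfl <;> omega
    · exact h'
  obtain ⟨A, c', k', B, s, heq, hB, hc'⟩ :=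
    exists_pair t c k hmem' hc (fun p hp => hs p (by simp [hp]))
  -- now (c,k)::t = A ++ (c',k') :: (B ++ (-c',k') :: s)
  have hBsigns : ∀ p ∈ B, p.1 = 1 ∨ p.1 = -1 := by
    intro p hp
    apply hs
    rw [show ((c, k) :: t : List (ℤ × I)) = _ from heq]
    simp [hp]
  rcases sortOrDrop c' hc' B hBsigns with ⟨N, P, hN, hP, hlen, hR⟩ | ⟨C, hC, hR⟩
  · -- sorted: slide, then drop
    refine ⟨A ++ (N ++ (P ++ s)), ?_, ?_⟩
    · rw [heq]
      have step1 : R I ((c', k') :: (B ++ (-c', k') :: s))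
          ((c', k') :: (N ++ (P ++ (-c', k') :: s))) := by
        simpa using r_prefix [(c', k')] (hR ((-c', k') :: s))
      have step2 : R I ((c', k') :: (N ++ (P ++ (-c', k') :: s)))
          (N ++ (c', k') :: (P ++ (-c', k') :: s)) := by
        refine slide_right c' k' N _ (fun p hp => ⟨(hN p hp).1, hB p (hN p hp).2⟩)
      have step3 : R I (P ++ (-c', k') :: s) ((-c', k') :: (P ++ s)) := by
        refine slide_left (-c') k' P s (fun p hp => ?_)
        refine ⟨by rw [(hP p hp).1, neg_neg], hB p (hP p hp).2⟩
      have step3' : R I (N ++ (c', k') :: (P ++ (-c', k') :: s))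
          (N ++ (c', k') :: ((-c', k') :: (P ++ s))) := by
        have := r_prefix (N ++ [(c', k')]) step3
        simpa using this
      have step4 : SwitchDropMove I (N ++ (c', k') :: ((-c', k') :: (P ++ s)))
          (N ++ (P ++ s)) := SwitchDropMove.drop N (P ++ s) c' k'
      have all : R I ((c', k') :: (B ++ (-c', k') :: s)) (N ++ (P ++ s)) :=
        ((step1.trans step2).trans step3').tail step4
      exact r_prefix A all
    · rw [heq]
      simp only [List.length_append, List.length_cons]
      omega
  · refine ⟨A ++ (c', k') :: (C ++ (-c', k') :: s), ?_, ?_⟩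
    · rw [heq]
      have := r_prefix (A ++ [(c', k')]) (hR ((-c', k') :: s))
      simpa using this
    · rw [heq]
      simp only [List.length_append, List.length_cons]
      omega

lemma main_aux : ∀ (n : ℕ) (l : List (ℤ × I)), l.length ≤ n →
    (∀ p ∈ l, p.1 = 1 ∨ p.1 = -1) →
    (∀ k : I, l.count ((1 : ℤ), k) = l.count ((-1 : ℤ), k)) →
    R I l []
  | 0, l, hn, _, _ => by
      have h0 : l = [] := List.eq_nil_of_length_eq_zero (Nat.le_zero.1 hn)
      rw [h0]
  | n + 1, l, hn, hs, hb => by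
      by_cases hne : l = []
      · rw [hne]
      · obtain ⟨l', hR, hlt⟩ := step_shorter l hne hs hb
        obtain ⟨hs', hb'⟩ := preserve_r hR hs hb
        exact hR.trans (main_aux n l' (by omega) hs' hb')

end SDMaux

theorem balanced_list_reduces_to_nil {I : Type*} [DecidableEq I]
    (l : List (ℤ × I))
    (hsigns : ∀ p ∈ l, p.1 = 1 ∨ p.1 = -1)
    (hbal : ∀ k : I, l.count ((1 : ℤ), k) = l.count ((-1 : ℤ), k)) :
    Relation.ReflTransGen (SwitchDropMove I) l [] :=
  SDMaux.main_aux l.length l le_rfl hsigns hbal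
end
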